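/- Let S be a convex set in ℝⁿ with nonempty interior. Then the minimum L¹-distance from an interior point a to the frontier of S, d(a) = inf{‖x - a‖₁ : x ∈ frontier S}, satisfies d(a) = minⱼ min{ sup{t ≥ 0 : a + t eⱼ ∈ S}, sup{t ≥ 0 : a - t eⱼ ∈ S} }, provided S is bounded (so all suprema are finite and the infimum is attained). -/

import Mathlib

open Set

section Aux

variable {n : ℕ} {S : Set (Fin n → ℝ)} {a u : Fin n → ℝ}

private lemma exit_zero_mem (haS : a ∈ S) :
    (0:ℝ) ∈ {t : ℝ | 0 ≤ t ∧ a + t • u ∈ S} := by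
  refine ⟨le_refl 0, ?_⟩
  simpa using haS

private lemma exit_bddAbove (hbdd : Bornology.IsBounded S) (hu : u ≠ 0) :
    BddAbove {t : ℝ | 0 ≤ t ∧ a + t • u ∈ S} := by
  obtain ⟨R, hR⟩ := isBounded_iff_forall_norm_le.mp hbdd
  have hu' : 0 < ‖u‖ := norm_pos_iff.mpr hu
  refine ⟨(R + ‖a‖) / ‖u‖, fun t ht => ?_⟩
  have h1 : ‖t • u‖ ≤ R + ‖a‖ := by
    have h2 := hR _ ht.2
    calc ‖t • u‖ = ‖(a + t • u) - a‖ := by congr 1; abel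
    _ ≤ ‖a + t • u‖ + ‖a‖ := norm_sub_le _ _
    _ ≤ R + ‖a‖ := by linarith
  rw [norm_smul, Real.norm_eq_abs, abs_of_nonneg ht.1] at h1
  exact (le_div_iff₀ hu').mpr h1

private lemma exit_mem_of_lt (hS : Convex ℝ S) (haS : a ∈ S) {t : ℝ} (ht0 : 0 ≤ t)
    (htlt : t < sSup {t : ℝ | 0 ≤ t ∧ a + t • u ∈ S}) : a + t • u ∈ S := by
  obtain ⟨t', ht', hlt⟩ := exists_lt_of_lt_csSup ⟨0, exit_zero_mem haS⟩ htlt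
  have ht'0 : 0 < t' := lt_of_le_of_lt ht0 hlt
  have hθ1 : t / t' ≤ 1 := (div_le_one ht'0).mpr hlt.le
  have hθ0 : 0 ≤ t / t' := div_nonneg ht0 ht'0.le
  have hmul : (t / t') * t' = t := div_mul_cancel₀ t ht'0.ne'
  have key : (1 - t / t') • a + (t / t') • (a + t' • u) = a + t • u := by
    rw [smul_add, smul_smul, hmul]; module
  rw [← key]
  exact hS haS ht'.2 (by linarith) hθ0 (by ring)

private lemma exit_sSup_nonneg (haS : a ∈ S) (hbdd : Bornology.IsBounded S) (hu : u ≠ 0) :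
    0 ≤ sSup {t : ℝ | 0 ≤ t ∧ a + t • u ∈ S} :=
  le_csSup (exit_bddAbove hbdd hu) (exit_zero_mem haS)

private lemma exit_frontier (hbdd : Bornology.IsBounded S) (ha : a ∈ interior S) (hu : u ≠ 0) :
    a + sSup {t : ℝ | 0 ≤ t ∧ a + t • u ∈ S} • u ∈ frontier S := by
  have haS : a ∈ S := interior_subset ha
  set T : Set ℝ := {t : ℝ | 0 ≤ t ∧ a + t • u ∈ S} with hT
  have hne : T.Nonempty := ⟨0, exit_zero_mem haS⟩
  have hbd : BddAbove T := exit_bddAbove hbdd hu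
  have hu' : 0 < ‖u‖ := norm_pos_iff.mpr hu
  set L := sSup T with hL
  constructor
  · have h1 : L ∈ closure T := (isLUB_csSup hne hbd).mem_closure hne
    have h2 : (fun t : ℝ => a + t • u) '' closure T ⊆ closure ((fun t : ℝ => a + t • u) '' T) :=
      image_closure_subset_closure_image (by continuity)
    have h3 : ((fun t : ℝ => a + t • u) '' T) ⊆ S := by
      rintro _ ⟨t, ht, rfl⟩; exact ht.2
    exact closure_mono h3 (h2 ⟨L, h1, rfl⟩)
  · intro hmem
    obtain ⟨ε, hε, hball⟩ := Metric.isOpen_iff.mp isOpen_interior _ hmem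
    set δ : ℝ := ε / (2 * ‖u‖) with hδ
    have hδ0 : 0 < δ := by positivity
    have hL0 : 0 ≤ L := le_csSup hbd (exit_zero_mem haS)
    have hmemS : a + (L + δ) • u ∈ S := by
      refine interior_subset (hball ?_)
      have hdiff : (a + (L + δ) • u) - (a + L • u) = δ • u := by module
      rw [Metric.mem_ball, dist_eq_norm, hdiff, norm_smul, Real.norm_eq_abs,
        abs_of_nonneg hδ0.le]
      have : δ * ‖u‖ = ε / 2 := by
        rw [hδ]; field_simp
      rw [this]; linarith
    have hle : L + δ ≤ L := le_csSup hbd ⟨by linarith, hmemS⟩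
    linarith

end Aux

/-- For a bounded convex S and a ∈ interior S, the minimum L¹-distance from a to
the frontier equals the smallest one-dimensional exit distance along the
coordinate directions. -/
theorem min_L1_dist_coordinate_exits {n : ℕ} [NeZero n]
    (S : Set (Fin n → ℝ)) (hS : Convex ℝ S) (hbdd : Bornology.IsBounded S)
    (a : Fin n → ℝ) (ha : a ∈ interior S) :
    IsLeast {r : ℝ | ∃ x ∈ frontier S, r = ∑ j, |x j - a j|}
      (⨅ j : Fin n,
        min (sSup {t : ℝ | 0 ≤ t ∧ a + t • (Pi.single j 1 : Fin n → ℝ) ∈ S})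
            (sSup {t : ℝ | 0 ≤ t ∧ a - t • (Pi.single j 1 : Fin n → ℝ) ∈ S})) := by
  have haS : a ∈ S := interior_subset ha
  have hsingle_ne : ∀ j : Fin n, (Pi.single j 1 : Fin n → ℝ) ≠ 0 := by
    intro j h
    have := congrFun h j
    simp [Pi.single_eq_same] at this
  have hneg_ne : ∀ j : Fin n, -(Pi.single j 1 : Fin n → ℝ) ≠ 0 := by
    intro j h
    exact hsingle_ne j (by simpa using congrArg Neg.neg h)
  have hsetneg : ∀ j : Fin n,
      {t : ℝ | 0 ≤ t ∧ a - t • (Pi.single j 1 : Fin n → ℝ) ∈ S} =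
      {t : ℝ | 0 ≤ t ∧ a + t • (-(Pi.single j 1 : Fin n → ℝ)) ∈ S} := by
    intro j; ext t; simp [smul_neg, sub_eq_add_neg]
  set f : Fin n → ℝ := fun j =>
    min (sSup {t : ℝ | 0 ≤ t ∧ a + t • (Pi.single j 1 : Fin n → ℝ) ∈ S})
        (sSup {t : ℝ | 0 ≤ t ∧ a - t • (Pi.single j 1 : Fin n → ℝ) ∈ S}) with hfdef
  obtain ⟨j₀, hj₀⟩ := Finite.exists_min f
  have hbdb : BddBelow (Set.range f) := (Set.finite_range f).bddBelow
  have hiInf : ⨅ j, f j = f j₀ :=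
    le_antisymm (ciInf_le hbdb j₀) (le_ciInf hj₀)
  -- nonnegativity of each exit sup
  have hplus_nonneg : ∀ j : Fin n,
      0 ≤ sSup {t : ℝ | 0 ≤ t ∧ a + t • (Pi.single j 1 : Fin n → ℝ) ∈ S} :=
    fun j => exit_sSup_nonneg haS hbdd (hsingle_ne j)
  have hminus_nonneg : ∀ j : Fin n,
      0 ≤ sSup {t : ℝ | 0 ≤ t ∧ a - t • (Pi.single j 1 : Fin n → ℝ) ∈ S} := by
    intro j; rw [hsetneg j]; exact exit_sSup_nonneg haS hbdd (hneg_ne j)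
  have hf_nonneg : 0 ≤ f j₀ := le_min (hplus_nonneg j₀) (hminus_nonneg j₀)
  constructor
  · -- membership: the minimum is attained at a frontier point
    rw [hiInf]
    rcases min_cases (sSup {t : ℝ | 0 ≤ t ∧ a + t • (Pi.single j₀ 1 : Fin n → ℝ) ∈ S})
        (sSup {t : ℝ | 0 ≤ t ∧ a - t • (Pi.single j₀ 1 : Fin n → ℝ) ∈ S}) with h | h
    · -- plus direction
      set L := sSup {t : ℝ | 0 ≤ t ∧ a + t • (Pi.single j₀ 1 : Fin n → ℝ) ∈ S} with hLdef
      refine ⟨a + L • (Pi.single j₀ 1 : Fin n → ℝ), exit_frontier hbdd ha (hsingle_ne j₀), ?_⟩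
      have hL0 : 0 ≤ L := hplus_nonneg j₀
      have : ∀ k : Fin n, |(a + L • (Pi.single j₀ 1 : Fin n → ℝ)) k - a k|
          = if k = j₀ then L else 0 := by
        intro k
        rcases eq_or_ne k j₀ with rfl | hk
        · simp [Pi.single_eq_same, abs_of_nonneg hL0]
        · simp [Pi.single_eq_of_ne hk, hk]
      rw [hfdef]
      simp only [this]
      rw [Finset.sum_ite_eq' Finset.univ j₀ (fun _ => L)]
      simp [h.1]
      exact h.1
    · -- minus direction
      set L := sSup {t : ℝ | 0 ≤ t ∧ a - t • (Pi.single j₀ 1 : Fin n → ℝ) ∈ S} with hLdef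
      have hL0 : 0 ≤ L := hminus_nonneg j₀
      have hfront : a + L • (-(Pi.single j₀ 1 : Fin n → ℝ)) ∈ frontier S := by
        rw [hLdef, hsetneg j₀]
        exact exit_frontier hbdd ha (hneg_ne j₀)
      refine ⟨a + L • (-(Pi.single j₀ 1 : Fin n → ℝ)), hfront, ?_⟩
      have : ∀ k : Fin n, |(a + L • (-(Pi.single j₀ 1 : Fin n → ℝ))) k - a k|
          = if k = j₀ then L else 0 := by
        intro k
        rcases eq_or_ne k j₀ with rfl | hk
        · simp [Pi.single_eq_same, abs_of_nonneg hL0]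
        · simp [Pi.single_eq_of_ne hk, hk]
      rw [hfdef]
      simp only [this]
      rw [Finset.sum_ite_eq' Finset.univ j₀ (fun _ => L)]
      simp [h.1]
      exact h.1
  · -- lower bound
    rintro r ⟨x, hx, rfl⟩
    by_contra hcon
    push_neg at hcon
    -- x is within L¹ distance < iInf f of a; show the open L¹ ball is in S
    have hball_sub : ∀ y : Fin n → ℝ, (∑ j, |y j - a j|) < ⨅ j, f j → y ∈ S := by
      intro y hy
      set t : ℝ := ∑ j, |y j - a j| with htdef
      have ht0 : 0 ≤ t := Finset.sum_nonneg fun j _ => abs_nonneg _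
      rcases eq_or_lt_of_le ht0 with heq | hpos
      · -- t = 0 ⇒ y = a
        have : ∀ j : Fin n, |y j - a j| = 0 := by
          intro j
          have := Finset.sum_eq_zero_iff_of_nonneg (fun j _ => abs_nonneg (y j - a j)) |>.mp
            heq.symm
          exact this j (Finset.mem_univ j)
        have : y = a := funext fun j => by
          have := abs_eq_zero.mp (this j); linarith [sub_eq_zero.mp this]
        rw [this]; exact haS
      · -- convex combination
        set lam : Fin n → ℝ := fun j => |y j - a j| / t with hlam
        set c : Fin n → ℝ := fun j => if a j ≤ y j then t else -t with hc
        set v : Fin n → (Fin n → ℝ) := fun j => a + c j • (Pi.single j 1 : Fin n → ℝ)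
          with hv
        have hlam_nonneg : ∀ j ∈ Finset.univ, (0:ℝ) ≤ lam j :=
          fun j _ => div_nonneg (abs_nonneg _) ht0
        have hlam_sum : ∑ j, lam j = 1 := by
          rw [hlam]
          simp only
          rw [← Finset.sum_div]
          exact div_self hpos.ne'
        have hvmem : ∀ j ∈ Finset.univ, v j ∈ S := by
          intro j _
          simp only [hv, hc]
          have htlt : t < f j := lt_of_lt_of_le hy (ciInf_le hbdb j)
          split_ifs
          · exact exit_mem_of_lt hS haS ht0
              (lt_of_lt_of_le htlt (min_le_left _ _))
          · have h1 : t < sSup {s : ℝ | 0 ≤ s ∧ a - s • (Pi.single j 1 : Fin n → ℝ) ∈ S} :=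
              lt_of_lt_of_le htlt (min_le_right _ _)
            rw [hsetneg j] at h1
            have := exit_mem_of_lt hS haS ht0 h1
            simpa [smul_neg, neg_smul] using this
        have hcomb : ∑ j, lam j • v j = y := by
          rw [hv]
          simp only
          have expand : ∀ j : Fin n, lam j • (a + c j • (Pi.single j 1 : Fin n → ℝ))
              = lam j • a + Pi.single j (lam j * c j) := by
            intro j
            rw [smul_add, smul_smul, ← Pi.single_smul]
            simp [smul_eq_mul]
          simp only [expand]
          rw [Finset.sum_add_distrib, ← Finset.sum_smul, hlam_sum, one_smul]
          have hlc : ∀ j : Fin n, lam j * c j = y j - a j := by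
            intro j
            rw [hlam, hc]
            simp only
            split_ifs with hj
            · rw [abs_of_nonneg (by linarith : (0:ℝ) ≤ y j - a j)]
              field_simp
            · push_neg at hj
              rw [abs_of_neg (by linarith : y j - a j < 0)]
              field_simp
          simp only [hlc]
          have : ∑ j : Fin n, Pi.single j (y j - a j) = (fun k => y k - a k) := by
            have := Finset.univ_sum_single (fun k : Fin n => y k - a k)
            exact this
          rw [this]
          funext k
          simp
        rw [← hcomb]
        exact hS.sum_mem hlam_nonneg hlam_sum hvmem
    -- the open L¹ ball is open and contained in S, hence in interior S
    have hopen : IsOpen {y : Fin n → ℝ | (∑ j, |y j - a j|) < ⨅ j, f j} := by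
      have hcont : Continuous fun y : Fin n → ℝ => ∑ j, |y j - a j| := by
        apply continuous_finset_sum
        intro j _
        exact ((continuous_apply j).sub continuous_const).abs
      exact isOpen_lt hcont continuous_const
    have hxint : x ∈ interior S :=
      interior_maximal hball_sub hopen hcon
    exact hx.2 hxint
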